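/- Let μ be a partition of n+1 and (i,j) a cell of μ such that (i+1,j) ∈ μ. Then D_X Δ_{μ/ij}(X,Y) equals a nonzero constant times Δ_{μ/(i+1),j}(X,Y), where D_X = ∂/∂x_1 + ... + ∂/∂x_{n+1} restricted to the n variables appearing, and μ/ij denotes the n-cell lattice diagram obtained from μ by deleting the cell (i,j). If (i+1,j) ∉ μ, then D_X Δ_{μ/ij}(X,Y) = 0. -/

import Mathlib

open MvPolynomial Finset

/-- The lattice determinant `Δ_D(X;Y) = det(x_i^{r_j} y_i^{c_j})` of the `n`-cell
diagram `D = {(r_1,c_1),…,(r_n,c_n)}`; `Sum.inl i` is the variable `x_{i+1}` and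
`Sum.inr i` is the variable `y_{i+1}`. -/
noncomputable def latticeDetL (n : ℕ) (r c : Fin n → ℕ) : MvPolynomial (Fin n ⊕ Fin n) ℚ :=
  Matrix.det (Matrix.of fun i j : Fin n =>
    MvPolynomial.X (Sum.inl i) ^ r j * MvPolynomial.X (Sum.inr i) ^ c j)

/-- The polarization operator `D_X = ∂_{x_1} + ⋯ + ∂_{x_n}`. -/
noncomputable def DXop (n : ℕ) (P : MvPolynomial (Fin n ⊕ Fin n) ℚ) :
    MvPolynomial (Fin n ⊕ Fin n) ℚ :=
  ∑ a : Fin n, MvPolynomial.pderiv (Sum.inl a) P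

lemma pderiv_finset_prod {ι τ : Type*} [DecidableEq ι] [DecidableEq τ] (v : τ) (s : Finset ι)
    (f : ι → MvPolynomial τ ℚ) :
    pderiv v (∏ x ∈ s, f x) = ∑ x ∈ s, pderiv v (f x) * ∏ y ∈ s.erase x, f y := by
  induction s using Finset.induction_on with
  | empty => simp
  | @insert a s ha ih =>
    rw [Finset.prod_insert ha, pderiv_mul, ih, Finset.sum_insert ha, Finset.erase_insert ha,
      Finset.mul_sum]
    congr 1
    apply Finset.sum_congr rfl
    intro x hx
    rw [Finset.erase_insert_of_ne (by rintro rfl; exact ha hx),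
      Finset.prod_insert (fun h => ha (Finset.mem_of_mem_erase h))]
    ring

lemma pderiv_entry (n : ℕ) (a u : Fin n) (p q : ℕ) :
    pderiv (Sum.inl a) ((X (Sum.inl u) : MvPolynomial (Fin n ⊕ Fin n) ℚ) ^ p * X (Sum.inr u) ^ q)
      = if u = a then (p : MvPolynomial (Fin n ⊕ Fin n) ℚ) * X (Sum.inl u) ^ (p - 1)
          * X (Sum.inr u) ^ q else 0 := by
  by_cases h : u = a
  · subst h
    rw [pderiv_mul, pderiv_pow, pderiv_pow, pderiv_X_self, pderiv_X_of_ne (by simp)]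
    simp [mul_comm]
  · rw [pderiv_mul, pderiv_pow, pderiv_pow, pderiv_X_of_ne (by simp [h]),
      pderiv_X_of_ne (by simp)]
    simp [h]

lemma DX_expand (n : ℕ) (r c : Fin n → ℕ) :
    DXop n (latticeDetL n r c)
      = ∑ b : Fin n, (r b : ℚ) • latticeDetL n (Function.update r b (r b - 1)) c := by
  classical
  have hC : ∀ (m : ℤ) (v : Fin n ⊕ Fin n) (P : MvPolynomial (Fin n ⊕ Fin n) ℚ),
      pderiv v ((m : MvPolynomial (Fin n ⊕ Fin n) ℚ) * P)
        = (m : MvPolynomial (Fin n ⊕ Fin n) ℚ) * pderiv v P := by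
    intro m v P
    rw [show ((m : MvPolynomial (Fin n ⊕ Fin n) ℚ)) = C ((m : ℚ)) from
      (map_intCast (C : ℚ →+* _) m).symm, pderiv_C_mul]
  have hsmul : ∀ (m : ℕ) (P : MvPolynomial (Fin n ⊕ Fin n) ℚ),
      (m : ℚ) • P = (m : MvPolynomial (Fin n ⊕ Fin n) ℚ) * P := by
    intro m P
    rw [MvPolynomial.smul_eq_C_mul, map_natCast]
  unfold DXop latticeDetL
  simp only [Matrix.det_apply', Matrix.of_apply, map_sum, hC, pderiv_finset_prod, pderiv_entry,
    hsmul, Finset.mul_sum]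
  rw [Finset.sum_comm]
  trans (∑ σ : Equiv.Perm (Fin n), ∑ b : Fin n,
      ((Equiv.Perm.sign σ : ℤ) : MvPolynomial (Fin n ⊕ Fin n) ℚ) *
        ((r b : MvPolynomial (Fin n ⊕ Fin n) ℚ) * X (Sum.inl (σ b)) ^ (r b - 1)
            * X (Sum.inr (σ b)) ^ c b *
          ∏ x ∈ univ.erase b, X (Sum.inl (σ x)) ^ r x * X (Sum.inr (σ x)) ^ c x))
  · apply Finset.sum_congr rfl
    intro σ _
    rw [Finset.sum_comm]
    apply Finset.sum_congr rfl
    intro b _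
    simp only [mul_ite, ite_mul, mul_zero, zero_mul, Finset.sum_ite_eq, Finset.mem_univ, if_true]
  · rw [Finset.sum_comm]
    apply Finset.sum_congr rfl
    intro b _
    apply Finset.sum_congr rfl
    intro σ _
    rw [← Finset.mul_prod_erase univ _ (Finset.mem_univ b), Function.update_self]
    have hpr : (∏ x ∈ univ.erase b, (X (Sum.inl (σ x)) : MvPolynomial (Fin n ⊕ Fin n) ℚ)
          ^ Function.update r b (r b - 1) x * X (Sum.inr (σ x)) ^ c x)
        = ∏ x ∈ univ.erase b, X (Sum.inl (σ x)) ^ r x * X (Sum.inr (σ x)) ^ c x :=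
      Finset.prod_congr rfl (fun x hx => by
        rw [Function.update_of_ne (Finset.ne_of_mem_erase hx)])
    rw [hpr]
    ring

lemma lattice_det_dup (n : ℕ) (rr cc : Fin n → ℕ) (k b : Fin n) (hkb : k ≠ b)
    (h1 : rr k = rr b) (h2 : cc k = cc b) : latticeDetL n rr cc = 0 := by
  unfold latticeDetL
  exact Matrix.det_zero_of_column_eq hkb (fun a => by
    rw [Matrix.of_apply, Matrix.of_apply, h1, h2])

lemma lattice_det_perm (n : ℕ) (r c r' c' : Fin n → ℕ) (e : Equiv.Perm (Fin n))
    (h1 : ∀ k, r' (e k) = r k) (h2 : ∀ k, c' (e k) = c k) :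
    latticeDetL n r c = ((Equiv.Perm.sign e : ℤ) : ℚ) • latticeDetL n r' c' := by
  unfold latticeDetL
  have hM : (Matrix.of fun a b : Fin n =>
        (X (Sum.inl a) : MvPolynomial (Fin n ⊕ Fin n) ℚ) ^ r b * X (Sum.inr a) ^ c b)
      = (Matrix.of fun a b : Fin n =>
        (X (Sum.inl a) : MvPolynomial (Fin n ⊕ Fin n) ℚ) ^ r' b * X (Sum.inr a) ^ c' b).submatrix
        id e := by
    ext a b
    rw [Matrix.submatrix_apply, Matrix.of_apply, Matrix.of_apply, h1, h2]
    rfl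
  rw [hM, Matrix.det_permute', MvPolynomial.smul_eq_C_mul, map_intCast]

/-- for a partition `μ` of `n+1` and `(i,j) ∈ μ`, if `(i+1,j) ∈ μ` then
`D_X Δ_{μ/ij} = cte · Δ_{μ/(i+1)j}` for a nonzero constant, and if `(i+1,j) ∉ μ` then
`D_X Δ_{μ/ij} = 0`.  The `n`-cell diagrams `μ/ij` and `μ/(i+1)j` are presented by
arbitrary injective listings of their cells. -/
theorem stmt8 (n : ℕ) (μ : ℕ → ℕ) (hmono : Antitone μ)
    (hvanish : ∀ t, n + 1 ≤ t → μ t = 0)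
    (hsum : ∑ t ∈ Finset.range (n + 1), μ t = n + 1)
    (i j : ℕ) (hij : j < μ i)
    (r c : Fin n → ℕ)
    (hinj : Function.Injective fun k => (r k, c k))
    (hcells : ∀ p : ℕ × ℕ,
      (p ∈ Set.range fun k => (r k, c k)) ↔ (p.2 < μ p.1 ∧ p ≠ (i, j))) :
    (∀ r' c' : Fin n → ℕ,
        Function.Injective (fun k => (r' k, c' k)) →
        (∀ p : ℕ × ℕ,
          (p ∈ Set.range fun k => (r' k, c' k)) ↔ (p.2 < μ p.1 ∧ p ≠ (i + 1, j))) →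
        j < μ (i + 1) →
        ∃ k : ℚ, k ≠ 0 ∧ DXop n (latticeDetL n r c) = k • latticeDetL n r' c') ∧
      (μ (i + 1) ≤ j → DXop n (latticeDetL n r c) = 0) := by
  classical
  have expand := DX_expand n r c
  have hmem : ∀ b : Fin n, c b < μ (r b) ∧ (r b, c b) ≠ (i, j) := fun b =>
    (hcells (r b, c b)).mp ⟨b, rfl⟩
  have hterm0 : ∀ b : Fin n, (r b, c b) ≠ (i + 1, j) →
      (r b : ℚ) • latticeDetL n (Function.update r b (r b - 1)) c = 0 := by
    intro b hb
    rcases Nat.eq_zero_or_pos (r b) with h0 | h0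
    · rw [h0]; simp
    · have h2 : c b < μ (r b - 1) := lt_of_lt_of_le (hmem b).1 (hmono (Nat.sub_le _ _))
      have h3 : (r b - 1, c b) ≠ (i, j) := by
        intro h
        apply hb
        have hfst : r b - 1 = i := congrArg Prod.fst h
        have hsnd : c b = j := congrArg Prod.snd h
        rw [Prod.mk.injEq]
        exact ⟨by omega, hsnd⟩
      obtain ⟨k, hk⟩ := (hcells (r b - 1, c b)).mpr ⟨h2, h3⟩
      have hrk : r k = r b - 1 := congrArg Prod.fst hk
      have hck : c k = c b := congrArg Prod.snd hk
      have hkb : k ≠ b := by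
        intro h; subst h; omega
      rw [lattice_det_dup n _ c k b hkb
        (by rw [Function.update_of_ne hkb, Function.update_self, hrk])
        hck, smul_zero]
  constructor
  · intro r' c' hinj' hcells' hj
    obtain ⟨b0, hb0'⟩ := (hcells (i + 1, j)).mpr ⟨hj, by simp⟩
    have hb0 : (r b0, c b0) = (i + 1, j) := hb0'
    have hr0 : r b0 = i + 1 := congrArg Prod.fst hb0
    have hc0 : c b0 = j := congrArg Prod.snd hb0
    set ru := Function.update r b0 (r b0 - 1) with hru
    have hrub0 : ru b0 = i := by rw [hru, Function.update_self, hr0]; omega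
    have hrune : ∀ k, k ≠ b0 → ru k = r k := fun k hk => Function.update_of_ne hk _ _
    -- injectivity of the updated listing
    have hfinj : Function.Injective (fun k => (ru k, c k)) := by
      intro a b hab
      simp only [Prod.mk.injEq] at hab
      by_cases ha : a = b0 <;> by_cases hb : b = b0
      · rw [ha, hb]
      · exfalso
        apply (hmem b).2
        rw [Prod.mk.injEq]
        refine ⟨?_, ?_⟩
        · rw [← hrune b hb, ← hab.1, ha, hrub0]
        · rw [← hab.2, ha, hc0]
      · exfalso
        apply (hmem a).2
        rw [Prod.mk.injEq]
        refine ⟨?_, ?_⟩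
        · rw [← hrune a ha, hab.1, hb, hrub0]
        · rw [hab.2, hb, hc0]
      · exact hinj (by
          simp only [Prod.mk.injEq]
          exact ⟨by rw [← hrune a ha, ← hrune b hb, hab.1], hab.2⟩)
    -- each updated cell is in the range of (r', c')
    have hex : ∀ k : Fin n, ∃ k', (r' k', c' k') = (ru k, c k) := by
      intro k
      by_cases hk : k = b0
      · subst hk
        have := (hcells' (i, j)).mpr ⟨hij, by simp⟩
        obtain ⟨k', hk'⟩ := this
        have hk'' : (r' k', c' k') = (i, j) := hk'
        exact ⟨k', by rw [hk'', hrub0, hc0]⟩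
      · have hne : (r k, c k) ≠ (i + 1, j) := by
          intro h
          exact hk (hinj (show (r k, c k) = (r b0, c b0) by rw [h, hb0]))
        obtain ⟨k', hk'⟩ := (hcells' (r k, c k)).mpr ⟨(hmem k).1, hne⟩
        have hk'' : (r' k', c' k') = (r k, c k) := hk'
        exact ⟨k', by rw [hk'', hrune k hk]⟩
    choose τ hτ using hex
    have hτinj : Function.Injective τ := by
      intro a b hab
      apply hfinj
      simp only
      rw [← hτ a, ← hτ b, hab]
    have hτbij : Function.Bijective τ := Finite.injective_iff_bijective.mp hτinj
    set e := Equiv.ofBijective τ hτbij with he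
    have hperm := lattice_det_perm n ru c r' c' e
      (fun k => congrArg Prod.fst (hτ k)) (fun k => congrArg Prod.snd (hτ k))
    refine ⟨(i + 1 : ℚ) * ((Equiv.Perm.sign e : ℤ) : ℚ), ?_, ?_⟩
    · have : ((Equiv.Perm.sign e : ℤ) : ℚ) ≠ 0 := by
        rcases Int.units_eq_one_or (Equiv.Perm.sign e) with h | h <;> rw [h] <;> norm_num
      positivity
    · rw [expand, Finset.sum_eq_single b0 (fun b _ hbne => hterm0 b (fun h =>
        hbne (hinj (show (r b, c b) = (r b0, c b0) by rw [h, hb0]))))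
        (fun h => absurd (Finset.mem_univ b0) h)]
      rw [← hru, hperm, smul_smul, hr0]
      push_cast
      ring_nf
  · intro hji
    rw [expand]
    apply Finset.sum_eq_zero
    intro b _
    apply hterm0
    intro h
    have h1 : r b = i + 1 := congrArg Prod.fst h
    have h2 : c b = j := congrArg Prod.snd h
    have := (hmem b).1
    rw [h1, h2] at this
    omega
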